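/- Let G be a linear 3-graph with m edges on n vertices (no isolated vertices) with at most 2 vertices of degree ≥ 6, s of them. Assign to each incidence (v, e) with v ∈ e the weight χ(v,e)/deg(v), where χ(v,e) = 0 if deg(v) ≥ 6; χ(v,e) = 1 if deg(v) ∈ {1,2,4,5}; and if deg(v) = 3, χ(v,e) = 1.05 when e contains a vertex of degree ≥ 6 and χ(v,e) = 0.9 otherwise. Then the total weight ∑_{e ∈ E} ∑_{v ∈ e} χ(v,e)/deg(v) is at most n - s. -/

import Mathlib

open Finset

/-- A linear 3-graph: all edges have 3 vertices and two distinct edges share at most one vertex. -/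
def Linear3 {V : Type*} [DecidableEq V] (E : Finset (Finset V)) : Prop :=
  (∀ e ∈ E, e.card = 3) ∧ ∀ e ∈ E, ∀ f ∈ E, e ≠ f → (e ∩ f).card ≤ 1

/-- Degree of a vertex: the number of edges containing it. -/
def deg {V : Type*} [DecidableEq V] (E : Finset (Finset V)) (v : V) : ℕ :=
  (E.filter fun e => v ∈ e).card

/-- A crown: four edges e = {x,y,z}, e1, e2, e3 with e1,e2,e3 pairwise disjoint and
    ei ∩ e = {x},{y},{z} respectively. -/
def HasCrown {V : Type*} [DecidableEq V] (E : Finset (Finset V)) : Prop :=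
  ∃ x y z : V, ∃ e ∈ E, ∃ e1 ∈ E, ∃ e2 ∈ E, ∃ e3 ∈ E,
    x ≠ y ∧ x ≠ z ∧ y ≠ z ∧ e = {x, y, z} ∧
    Disjoint e1 e2 ∧ Disjoint e1 e3 ∧ Disjoint e2 e3 ∧
    e1 ∩ e = {x} ∧ e2 ∩ e = {y} ∧ e3 ∩ e = {z}

/-- χ(v) = 1 if deg v ≤ 5, else 0. -/
def chi {V : Type*} [DecidableEq V] (E : Finset (Finset V)) (v : V) : ℚ :=
  if deg E v ≤ 5 then 1 else 0

/-- The set of vertices outside {x,y,z} lying on a common edge with p. -/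
def nbhd {V : Type*} [DecidableEq V] (E : Finset (Finset V)) (x y z p : V) : Finset V :=
  ((E.filter fun f => p ∈ f).biUnion id) \ {x, y, z}

/-- The weight χ(v,e): 0 if deg v ≥ 6; for deg v = 3 it is 1.05 if e contains a vertex of
    degree ≥ 6 and 0.9 otherwise; and 1 in all other cases (deg v ∈ {1,2,4,5}). -/
def chi2 {V : Type*} [DecidableEq V] (E : Finset (Finset V)) (e : Finset V) (v : V) : ℚ :=
  if 6 ≤ deg E v then 0
  else if deg E v = 3 then (if ∃ u ∈ e, 6 ≤ deg E u then 21/20 else 9/10)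
  else 1


theorem stmt_12 {V : Type*} [Fintype V] [DecidableEq V] (E : Finset (Finset V))
    (hlin : Linear3 E) (hiso : ∀ v : V, 1 ≤ deg E v)
    (hs : (Finset.univ.filter fun v : V => 6 ≤ deg E v).card ≤ 2) :
    ∑ e ∈ E, ∑ v ∈ e, chi2 E e v / (deg E v : ℚ) ≤
      (Fintype.card V : ℚ) - ((Finset.univ.filter fun v : V => 6 ≤ deg E v).card : ℚ) := by
  classical
  have hswap : ∑ e ∈ E, ∑ v ∈ e, chi2 E e v / (deg E v : ℚ)
      = ∑ v : V, ∑ e ∈ E.filter (fun e => v ∈ e), chi2 E e v / (deg E v : ℚ) := by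
    calc ∑ e ∈ E, ∑ v ∈ e, chi2 E e v / (deg E v : ℚ)
        = ∑ e ∈ E, ∑ v : V, if v ∈ e then chi2 E e v / (deg E v : ℚ) else 0 := by
          refine Finset.sum_congr rfl fun e he => ?_
          rw [Finset.sum_ite_mem, Finset.univ_inter]
      _ = ∑ v : V, ∑ e ∈ E, if v ∈ e then chi2 E e v / (deg E v : ℚ) else 0 :=
          Finset.sum_comm
      _ = ∑ v : V, ∑ e ∈ E.filter (fun e => v ∈ e), chi2 E e v / (deg E v : ℚ) := by
          refine Finset.sum_congr rfl fun v _ => (Finset.sum_filter _ _).symm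
  have hvert : ∀ v : V, ∑ e ∈ E.filter (fun e => v ∈ e), chi2 E e v / (deg E v : ℚ)
      ≤ if 6 ≤ deg E v then 0 else 1 := by
    intro v
    rw [← Finset.sum_div]
    by_cases h6 : 6 ≤ deg E v
    · have hz : ∀ e ∈ E.filter (fun e => v ∈ e), chi2 E e v = 0 := by
        intro e he; simp [chi2, h6]
      rw [Finset.sum_congr rfl hz, Finset.sum_const_zero]
      simp [h6]
    · have hd1 : 1 ≤ deg E v := hiso v
      have hdpos : (0:ℚ) < (deg E v : ℚ) := by exact_mod_cast hd1
      simp only [h6, if_false]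
      rw [div_le_one hdpos]
      by_cases h3 : deg E v = 3
      · -- the degree-3 case
        set F := E.filter (fun e => v ∈ e) with hF
        have hcardF : F.card = 3 := h3
        set P : Finset V → Prop := fun e => ∃ u ∈ e, 6 ≤ deg E u with hP
        have hA : (F.filter P).card ≤ 2 := by
          refine le_trans ?_ hs
          set f : Finset V → V := fun e =>
            if h : ∃ u ∈ e, 6 ≤ deg E u then h.choose else v with hf
          refine Finset.card_le_card_of_injOn f ?_ ?_
          · intro e he
            simp only [Finset.mem_coe, Finset.mem_filter, hP] at he
            simp only [hf, dif_pos he.2, Finset.mem_coe, Finset.mem_filter, Finset.mem_univ, true_and]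
            exact he.2.choose_spec.2
          · intro e1 he1 e2 he2 hfe
            by_contra hne
            simp only [Finset.mem_coe, Finset.mem_filter, hF, hP] at he1 he2
            obtain ⟨⟨he1E, hve1⟩, hex1⟩ := he1
            obtain ⟨⟨he2E, hve2⟩, hex2⟩ := he2
            have hu1 := hex1.choose_spec
            have hu2 := hex2.choose_spec
            have hfe1 : f e1 = hex1.choose := by simp [hf, dif_pos hex1]
            have hfe2 : f e2 = hex2.choose := by simp [hf, dif_pos hex2]
            set u := hex1.choose with hu
            have huu : u = hex2.choose := by rw [← hfe1, hfe, hfe2]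
            have hune : u ≠ v := by
              intro h; rw [h] at hu1; omega
            have hsub : ({v, u} : Finset V) ⊆ e1 ∩ e2 := by
              intro w hw
              simp only [Finset.mem_insert, Finset.mem_singleton] at hw
              rcases hw with rfl | rfl
              · exact Finset.mem_inter.2 ⟨hve1, hve2⟩
              · exact Finset.mem_inter.2 ⟨hu1.1, huu ▸ hu2.1⟩
            have h2 : 2 ≤ (e1 ∩ e2).card := by
              have : ({v, u} : Finset V).card = 2 := by
                rw [Finset.card_insert_of_notMem (by simpa using hune.symm),
                  Finset.card_singleton]
              rw [← this]
              exact Finset.card_le_card hsub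
            have := hlin.2 e1 he1E e2 he2E hne
            omega
        have hsplit := Finset.sum_filter_add_sum_filter_not F P (fun e => chi2 E e v)
        have hval1 : ∀ e ∈ F.filter P, chi2 E e v = 21/20 := by
          intro e he
          simp only [Finset.mem_filter, hP] at he
          simp [chi2, h6, h3, he.2]
        have hval2 : ∀ e ∈ F.filter (fun e => ¬ P e), chi2 E e v = 9/10 := by
          intro e he
          simp only [Finset.mem_filter, hP] at he
          simp [chi2, h6, h3, he.2]
        have hcards : (F.filter P).card + (F.filter (fun e => ¬ P e)).card = 3 := by
          rw [Finset.card_filter_add_card_filter_not, hcardF]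
        rw [← hsplit, Finset.sum_congr rfl hval1, Finset.sum_congr rfl hval2,
          Finset.sum_const, Finset.sum_const, nsmul_eq_mul, nsmul_eq_mul]
        have ha : ((F.filter P).card : ℚ) ≤ 2 := by exact_mod_cast hA
        have hb : ((F.filter P).card : ℚ) + ((F.filter (fun e => ¬ P e)).card : ℚ) = 3 := by
          exact_mod_cast hcards
        have hd : (deg E v : ℚ) = 3 := by rw [h3]; norm_num
        rw [hd]
        linarith
      · have ho : ∀ e ∈ E.filter (fun e => v ∈ e), chi2 E e v = 1 := by
          intro e he; simp [chi2, h6, h3]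
        rw [Finset.sum_congr rfl ho, Finset.sum_const, nsmul_eq_mul, mul_one]
        exact le_of_eq rfl
  calc ∑ e ∈ E, ∑ v ∈ e, chi2 E e v / (deg E v : ℚ)
      ≤ ∑ v : V, if 6 ≤ deg E v then (0:ℚ) else 1 := by
        rw [hswap]; exact Finset.sum_le_sum fun v _ => hvert v
    _ = ((Finset.univ.filter fun v : V => ¬ 6 ≤ deg E v).card : ℚ) := by
        rw [Finset.sum_ite, Finset.sum_const_zero, Finset.sum_const, zero_add,
          nsmul_eq_mul, mul_one]
    _ = (Fintype.card V : ℚ) - ((Finset.univ.filter fun v : V => 6 ≤ deg E v).card : ℚ) := by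
        have := Finset.card_filter_add_card_filter_not
          (s := (Finset.univ : Finset V)) (p := fun v => 6 ≤ deg E v)
        rw [Finset.card_univ] at this
        have : ((Finset.univ.filter fun v : V => 6 ≤ deg E v).card : ℚ)
            + ((Finset.univ.filter fun v : V => ¬ 6 ≤ deg E v).card : ℚ)
            = (Fintype.card V : ℚ) := by exact_mod_cast this
        linarith
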